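/- arXiv:1604.04234 — 4 statements merged into one kernel-verified Lean document; each statement's English description precedes it below -/
import Mathlib

section
/- Let μ₁, μ₂, μ₃ ∈ ℂ*. Set λᵢ = μᵢ² for i = 1,2,3 and λ₄ = (λ₁λ₂λ₃)⁻¹, and for each permutation {i,j,k} = {1,2,3} set tᵢ = μⱼμₖ + (μⱼμₖ)⁻¹. Then t₁² + t₂² + t₃² − t₁t₂t₃ = 4 + (1−λ₁)(1−λ₂)(1−λ₃)(1−λ₄). In particular, the quantity P(λ) := t₁² + t₂² + t₃² − t₁t₂t₃ equals 4 if and only if some λᵢ = 1. -/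
/-- The key trace identity of Section 3.1: for `λᵢ = μᵢ²` (`i = 1,2,3`),
`λ₄ = (λ₁λ₂λ₃)⁻¹` and `tᵢ = μⱼμₖ + (μⱼμₖ)⁻¹` for `{i,j,k} = {1,2,3}`, one has
`t₁² + t₂² + t₃² − t₁t₂t₃ = 4 + (1−λ₁)(1−λ₂)(1−λ₃)(1−λ₄)`; in particular this
quantity equals `4` iff some `λᵢ = 1`. -/
theorem trace_identity (μ₁ μ₂ μ₃ : ℂ) (hμ₁ : μ₁ ≠ 0) (hμ₂ : μ₂ ≠ 0) (hμ₃ : μ₃ ≠ 0)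
    (l₁ l₂ l₃ l₄ t₁ t₂ t₃ : ℂ)
    (hl₁ : l₁ = μ₁ ^ 2) (hl₂ : l₂ = μ₂ ^ 2) (hl₃ : l₃ = μ₃ ^ 2)
    (hl₄ : l₄ = (l₁ * l₂ * l₃)⁻¹)
    (ht₁ : t₁ = μ₂ * μ₃ + (μ₂ * μ₃)⁻¹)
    (ht₂ : t₂ = μ₁ * μ₃ + (μ₁ * μ₃)⁻¹)
    (ht₃ : t₃ = μ₁ * μ₂ + (μ₁ * μ₂)⁻¹) :
    t₁ ^ 2 + t₂ ^ 2 + t₃ ^ 2 - t₁ * t₂ * t₃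
      = 4 + (1 - l₁) * (1 - l₂) * (1 - l₃) * (1 - l₄) ∧
    (t₁ ^ 2 + t₂ ^ 2 + t₃ ^ 2 - t₁ * t₂ * t₃ = 4 ↔
      (l₁ = 1 ∨ l₂ = 1 ∨ l₃ = 1 ∨ l₄ = 1)) := by
  subst hl₁ hl₂ hl₃ hl₄ ht₁ ht₂ ht₃
  have key : (μ₂ * μ₃ + (μ₂ * μ₃)⁻¹) ^ 2 + (μ₁ * μ₃ + (μ₁ * μ₃)⁻¹) ^ 2 +
      (μ₁ * μ₂ + (μ₁ * μ₂)⁻¹) ^ 2 -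
      (μ₂ * μ₃ + (μ₂ * μ₃)⁻¹) * (μ₁ * μ₃ + (μ₁ * μ₃)⁻¹) * (μ₁ * μ₂ + (μ₁ * μ₂)⁻¹)
      = 4 + (1 - μ₁ ^ 2) * (1 - μ₂ ^ 2) * (1 - μ₃ ^ 2) * (1 - (μ₁ ^ 2 * μ₂ ^ 2 * μ₃ ^ 2)⁻¹) := by
    have h1 : μ₁ * μ₁⁻¹ = 1 := mul_inv_cancel₀ hμ₁
    have h2 : μ₂ * μ₂⁻¹ = 1 := mul_inv_cancel₀ hμ₂
    have h3 : μ₃ * μ₃⁻¹ = 1 := mul_inv_cancel₀ hμ₃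
    rw [mul_inv, mul_inv, mul_inv, mul_inv, mul_inv]
    linear_combination
      ((-1 : ℂ) * μ₂⁻¹ ^ 2 * μ₃⁻¹ ^ 2 + (2 : ℂ) * μ₃ * μ₃⁻¹ + (-1 : ℂ) * μ₃ * μ₂⁻¹ ^ 2 * μ₃⁻¹ + μ₃ ^ 2 * μ₂⁻¹ ^ 2 * μ₃⁻¹ ^ 2 + (2 : ℂ) * μ₂ * μ₂⁻¹ + (-1 : ℂ) * μ₂ * μ₂⁻¹ * μ₃⁻¹ ^ 2 + (-1 : ℂ) * μ₂ * μ₃ ^ 2 * μ₂⁻¹ + μ₂ ^ 2 * μ₂⁻¹ ^ 2 * μ₃⁻¹ ^ 2 + (-1 : ℂ) * μ₂ ^ 2 * μ₃ * μ₃⁻¹ + (-1 : ℂ) * μ₂ ^ 2 * μ₃ ^ 2 * μ₂⁻¹ ^ 2 * μ₃⁻¹ ^ 2 + (-1 : ℂ) * μ₁ * μ₁⁻¹ * μ₂⁻¹ ^ 2 * μ₃⁻¹ ^ 2 + μ₁ * μ₃ ^ 2 * μ₁⁻¹ * μ₂⁻¹ ^ 2 * μ₃⁻¹ ^ 2 +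 μ₁ * μ₂ ^ 2 * μ₁⁻¹ * μ₂⁻¹ ^ 2 * μ₃⁻¹ ^ 2 + (-1 : ℂ) * μ₁ * μ₂ ^ 2 * μ₃ ^ 2 * μ₁⁻¹ * μ₂⁻¹ ^ 2 * μ₃⁻¹ ^ 2) * h1 +
      ((2 : ℂ) + (-1 : ℂ) * μ₁⁻¹ ^ 2 * μ₃⁻¹ ^ 2 + (2 : ℂ) * μ₃ * μ₃⁻¹ + (-1 : ℂ) * μ₃ * μ₁⁻¹ ^ 2 * μ₃⁻¹ + (-1 : ℂ) * μ₃ ^ 2 + (-1 : ℂ) * μ₃ ^ 2 * μ₃⁻¹ ^ 2 + μ₃ ^ 2 * μ₁⁻¹ ^ 2 * μ₃⁻¹ ^ 2 + μ₂ * μ₂⁻¹ * μ₃⁻¹ ^ 2 + (-1 : ℂ) * μ₂ * μ₁⁻¹ ^ 2 * μ₂⁻¹ * μ₃⁻¹ ^ 2 + (-1 : ℂ) * μ₂ * μ₃ ^ 2 * μ₂⁻¹ * μ₃⁻¹ ^ 2 + μ₂ * μ₃ ^ 2 * μ₁⁻¹ ^ 2 * μ₂⁻¹ * μ₃⁻¹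 ^ 2 + (-1 : ℂ) * μ₁ ^ 2 * μ₃ * μ₃⁻¹) * h2 +
      ((3 : ℂ) + (-1 : ℂ) * μ₁⁻¹ ^ 2 * μ₂⁻¹ ^ 2 + (-1 : ℂ) * μ₃ * μ₃⁻¹ + μ₃ * μ₂⁻¹ ^ 2 * μ₃⁻¹ + μ₃ * μ₁⁻¹ ^ 2 * μ₃⁻¹ + (-1 : ℂ) * μ₃ * μ₁⁻¹ ^ 2 * μ₂⁻¹ ^ 2 * μ₃⁻¹ + (-1 : ℂ) * μ₂ ^ 2 + (-1 : ℂ) * μ₁ ^ 2) * h3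
  refine ⟨key, ?_⟩
  rw [key]
  constructor
  · intro h
    have h0 : (1 - μ₁ ^ 2) * (1 - μ₂ ^ 2) * (1 - μ₃ ^ 2) * (1 - (μ₁ ^ 2 * μ₂ ^ 2 * μ₃ ^ 2)⁻¹) = 0 := by
      linear_combination h
    rcases mul_eq_zero.1 h0 with h' | h'
    · rcases mul_eq_zero.1 h' with h'' | h''
      · rcases mul_eq_zero.1 h'' with h3 | h3
        · exact Or.inl (by linear_combination -h3)
        · exact Or.inr (Or.inl (by linear_combination -h3))
      · exact Or.inr (Or.inr (Or.inl (by linear_combination -h'')))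
    · exact Or.inr (Or.inr (Or.inr (by linear_combination -h')))
  · rintro (h | h | h | h) <;> rw [h] <;> ring
end

section
/- Let x ∈ ℂ* and set t = x + x⁻¹. Let μ₁ = (1+√5)/2 and μ₂ = (√5−1)/2. Then t² = μ₁² if and only if x² is a primitive 5th root of unity with positive real part, and t² = μ₂² if and only if x² is a primitive 5th root of unity with negative real part. -/
private lemma golden_key (s : ℝ) (hs : s ^ 2 = 5) (hs1 : 1 < s) (y : ℂ) (hy : y ≠ 0) :
    (y + y⁻¹ = ((s : ℂ) - 1) / 2 ↔ orderOf y = 5 ∧ 0 < y.re) ∧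
    (y + y⁻¹ = -((1 + (s : ℂ)) / 2) ↔ orderOf y = 5 ∧ y.re < 0) := by
  haveI : Fact (Nat.Prime 5) := ⟨by norm_num⟩
  have hc5 : (s : ℂ) ^ 2 = 5 := by exact_mod_cast congrArg (Complex.ofReal) hs
  have hconj : ∀ h5 : y ^ 5 = 1, y⁻¹ = (starRingEnd ℂ) y := fun h5 =>
    Complex.inv_eq_conj (Complex.norm_eq_one_of_pow_eq_one h5 (by norm_num))
  -- from the quadratic with root sum (s-1)/2, get y^5 = 1
  have pow1 : y ^ 2 + 1 = ((s : ℂ) - 1) / 2 * y → y ^ 5 = 1 := by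
    intro hq
    linear_combination ((y - 1) * (y ^ 2 + ((1 + (s : ℂ)) / 2) * y + 1)) * hq +
      (y ^ 3 / 4 - y ^ 2 / 4) * hc5
  have pow2 : y ^ 2 + 1 = -((1 + (s : ℂ)) / 2) * y → y ^ 5 = 1 := by
    intro hq
    linear_combination ((y - 1) * (y ^ 2 - ((s : ℂ) - 1) / 2 * y + 1)) * hq +
      (y ^ 3 / 4 - y ^ 2 / 4) * hc5
  constructor
  · constructor
    · intro h
      have hq : y ^ 2 + 1 = ((s : ℂ) - 1) / 2 * y := by
        field_simp at h; linear_combination h / 2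
      have h5 : y ^ 5 = 1 := pow1 hq
      have hne1 : y ≠ 1 := by
        rintro rfl
        have : (s : ℂ) = 5 := by linear_combination (-2 : ℂ) * hq
        rw [this] at hc5; norm_num at hc5
      refine ⟨orderOf_eq_prime h5 hne1, ?_⟩
      rw [hconj h5, Complex.add_conj] at h
      have h2 : (2 * y.re : ℝ) = (s - 1) / 2 := by exact_mod_cast h
      linarith
    · rintro ⟨hord, hre⟩
      have h5 : y ^ 5 = 1 := by rw [← hord]; exact pow_orderOf_eq_one y
      have hne1 : y ≠ 1 := by rintro rfl; simp at hord
      have hsum : y ^ 4 + y ^ 3 + y ^ 2 + y + 1 = 0 := by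
        have := sub_eq_zero.mpr h5
        have hfac : (y - 1) * (y ^ 4 + y ^ 3 + y ^ 2 + y + 1) = 0 := by
          linear_combination this
        rcases mul_eq_zero.mp hfac with h | h
        · exact absurd (sub_eq_zero.mp h) hne1
        · exact h
      have hfac2 : (y ^ 2 + 1 - ((s : ℂ) - 1) / 2 * y) *
          (y ^ 2 + 1 + ((1 + (s : ℂ)) / 2) * y) = 0 := by
        linear_combination hsum - (y ^ 2 / 4) * hc5
      rcases mul_eq_zero.mp hfac2 with h | h
      · field_simp
        linear_combination 2 * h
      · exfalso
        have heq : y + y⁻¹ = -((1 + (s : ℂ)) / 2) := by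
          field_simp
          linear_combination 2 * h
        rw [hconj h5, Complex.add_conj] at heq
        have h2 : (2 * y.re : ℝ) = -((1 + s) / 2) := by exact_mod_cast heq
        linarith
  · constructor
    · intro h
      have hq : y ^ 2 + 1 = -((1 + (s : ℂ)) / 2) * y := by
        field_simp at h; linear_combination h / 2
      have h5 : y ^ 5 = 1 := pow2 hq
      have hne1 : y ≠ 1 := by
        rintro rfl
        have : (s : ℂ) = -5 := by linear_combination (2 : ℂ) * hq
        rw [this] at hc5; norm_num at hc5
      refine ⟨orderOf_eq_prime h5 hne1, ?_⟩
      rw [hconj h5, Complex.add_conj] at h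
      have h2 : (2 * y.re : ℝ) = -((1 + s) / 2) := by exact_mod_cast h
      linarith
    · rintro ⟨hord, hre⟩
      have h5 : y ^ 5 = 1 := by rw [← hord]; exact pow_orderOf_eq_one y
      have hne1 : y ≠ 1 := by rintro rfl; simp at hord
      have hsum : y ^ 4 + y ^ 3 + y ^ 2 + y + 1 = 0 := by
        have := sub_eq_zero.mpr h5
        have hfac : (y - 1) * (y ^ 4 + y ^ 3 + y ^ 2 + y + 1) = 0 := by
          linear_combination this
        rcases mul_eq_zero.mp hfac with h | h
        · exact absurd (sub_eq_zero.mp h) hne1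
        · exact h
      have hfac2 : (y ^ 2 + 1 - ((s : ℂ) - 1) / 2 * y) *
          (y ^ 2 + 1 + ((1 + (s : ℂ)) / 2) * y) = 0 := by
        linear_combination hsum - (y ^ 2 / 4) * hc5
      rcases mul_eq_zero.mp hfac2 with h | h
      · exfalso
        have heq : y + y⁻¹ = ((s : ℂ) - 1) / 2 := by
          field_simp
          linear_combination 2 * h
        rw [hconj h5, Complex.add_conj] at heq
        have h2 : (2 * y.re : ℝ) = (s - 1) / 2 := by exact_mod_cast heq
        linarith
      · field_simp
        linear_combination 2 * h

/-- Lemma 3.3 (last two items): for `x ∈ ℂ*`, `t = x + x⁻¹`, `μ₁ = (1+√5)/2` and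
`μ₂ = (√5−1)/2`, one has `t² = μ₁²` iff `x²` is a primitive 5th root of unity with
positive real part, and `t² = μ₂²` iff `x²` is a primitive 5th root of unity with
negative real part. -/
theorem trace_vs_order_golden (x : ℂ) (hx : x ≠ 0) (t : ℂ) (ht : t = x + x⁻¹)
    (μ₁ μ₂ : ℂ)
    (hμ₁ : μ₁ = (1 + (Real.sqrt 5 : ℂ)) / 2)
    (hμ₂ : μ₂ = ((Real.sqrt 5 : ℂ) - 1) / 2) :
    (t ^ 2 = μ₁ ^ 2 ↔ orderOf (x ^ 2) = 5 ∧ 0 < (x ^ 2).re) ∧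
    (t ^ 2 = μ₂ ^ 2 ↔ orderOf (x ^ 2) = 5 ∧ (x ^ 2).re < 0) := by
  set s : ℝ := Real.sqrt 5 with hsdef
  have hs : s ^ 2 = 5 := Real.sq_sqrt (by norm_num)
  have hs0 : 0 ≤ s := Real.sqrt_nonneg 5
  have hs1 : 1 < s := by nlinarith
  have hc5 : (s : ℂ) ^ 2 = 5 := by exact_mod_cast congrArg (Complex.ofReal) hs
  have hy : x ^ 2 ≠ 0 := pow_ne_zero _ hx
  have ht2 : t ^ 2 = x ^ 2 + (x ^ 2)⁻¹ + 2 := by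
    rw [ht]; field_simp; ring
  obtain ⟨k1, k2⟩ := golden_key s hs hs1 (x ^ 2) hy
  constructor
  · rw [← k1, ht2, hμ₁]
    constructor
    · intro h; linear_combination h + hc5 / 4
    · intro h; linear_combination h - hc5 / 4
  · rw [← k2, ht2, hμ₂]
    constructor
    · intro h; linear_combination h + hc5 / 4
    · intro h; linear_combination h - hc5 / 4
end

section
/- Let n ≥ 4 and let a₁, a₂, a₃ ∈ ℂ* ∖ {1} with a₁a₂a₃ = 1. Set λ = (1,…,1,a₁,a₂,a₃) ∈ (ℂ*)ⁿ (so λ_{n−2} = a₁, λ_{n−1} = a₂, λₙ = a₃ and all other entries equal 1), and let v⁰ ∈ ℂ^{n−1} be the vector with v⁰_{n−1} = −a₂ and all other coordinates 0. Then the class [v⁰] is fixed by every element of G_λ, and every v ∈ ℂ^{n−1} with v ∉ ℂ·δ_λ and [v] ≠ [v⁰] has infinite G_λ-orbit. In other words, the action has exactly one finite orbit, which is a fixed point. -/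
noncomputable section

namespace BraidAff

/-- The paper's formula (§2.2) for the action of the pure braid generator `σ_{i,j}²`
on translation parts, written with 0-based `ℕ` indices (the paper uses 1-based
indices `1 ≤ i < j ≤ n−1`; here everything is shifted down by one, which leaves the
shape of the formulas unchanged). -/
def braidL (lam τ : ℕ → ℂ) (i j : ℕ) : ℕ → ℂ := fun ν =>
  if ν = i then
    lam j * τ i + (1 - lam i) * (∏ k ∈ Finset.Icc i j, lam k) * τ j
      + (1 - lam i) * (1 - lam j) *
        ∑ k ∈ Finset.Icc i j, (∏ l ∈ Finset.Ico i k, lam l) * τ k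
  else if ν = j then
    lam i * τ j + (1 - lam j) * (∏ k ∈ Finset.Ico (i + 1) j, (lam k)⁻¹) * τ i
      - (1 - lam i) * (1 - lam j) *
        ∑ k ∈ Finset.Ico (i + 1) j, (∏ l ∈ Finset.Ico k j, (lam l)⁻¹) * τ k
  else τ ν

/-- Extension of a finitely indexed vector to `ℕ` (by zero; only in-range indices
are ever used in the formulas). -/
def extv {m : ℕ} (f : Fin m → ℂ) : ℕ → ℂ := fun k => if h : k < m then f ⟨k, h⟩ else 0

/-- The linear map `L_{i,j}` on `ℂ^{n−1}`. -/
def braidLV {n : ℕ} (lam : Fin n → ℂ) (i j : Fin (n - 1)) (τ : Fin (n - 1) → ℂ) :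
    Fin (n - 1) → ℂ :=
  fun ν => braidL (extv lam) (extv τ) i.val j.val ν.val

/-- The vector `δ_λ = (1 − λ₁, …, 1 − λ_{n−1})`. -/
def deltaVec {n : ℕ} (lam : Fin n → ℂ) : Fin (n - 1) → ℂ :=
  fun ν => 1 - extv lam ν.val

/-- The group `G_λ` generated by the maps `L_{i,j}` (for `i < j` in `Fin (n−1)`),
inside the group of linear automorphisms of `ℂ^{n−1}`. -/
def Glam {n : ℕ} (lam : Fin n → ℂ) :
    Subgroup ((Fin (n - 1) → ℂ) ≃ₗ[ℂ] (Fin (n - 1) → ℂ)) :=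
  Subgroup.closure {g | ∃ i j : Fin (n - 1), i < j ∧ ∀ τ, g τ = braidLV lam i j τ}

/-- The equivalence class `[v]` of a translation part `v`:
`w ∼ v` iff `w = a • v + b • δ_λ` with `a ≠ 0`. -/
def affClass {m : ℕ} (δ v : Fin m → ℂ) : Set (Fin m → ℂ) :=
  {w | ∃ a b : ℂ, a ≠ 0 ∧ w = a • v + b • δ}

/-- The `G_λ`-orbit of the class `[v]`, as a set of equivalence classes. -/
def classOrbit {n : ℕ} (lam : Fin n → ℂ) (v : Fin (n - 1) → ℂ) :
    Set (Set (Fin (n - 1) → ℂ)) :=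
  {S | ∃ g ∈ Glam lam, S = affClass (deltaVec lam) (g v)}

end BraidAff

namespace BraidAff

lemma mul_apply' {m : ℕ} (f g : (Fin m → ℂ) ≃ₗ[ℂ] (Fin m → ℂ)) (x : Fin m → ℂ) :
    (f * g) x = f (g x) := rfl

lemma extv_val {m : ℕ} (u : Fin m → ℂ) (ν : Fin m) : extv u ν.val = u ν := by
  simp [extv]

lemma affClass_smul_add {m : ℕ} (δ v : Fin m → ℂ) (a b : ℂ) (ha : a ≠ 0) :
    affClass δ (a • v + b • δ) = affClass δ v := by
  ext w
  constructor
  · rintro ⟨a', b', ha', rfl⟩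
    exact ⟨a' * a, a' * b + b', mul_ne_zero ha' ha, by
      simp only [smul_add, smul_smul]; module⟩
  · rintro ⟨a', b', ha', rfl⟩
    refine ⟨a' * a⁻¹, b' - a' * a⁻¹ * b, mul_ne_zero ha' (inv_ne_zero ha), ?_⟩
    simp only [smul_add, smul_smul]
    match_scalars <;> field_simp <;> ring

/-- shear-scale equiv : `x_i ↦ α x_i`, `x_j ↦ x_j + β x_i`. -/
def shearEquiv (m : ℕ) (i j : Fin m) (hij : i ≠ j) (α β : ℂ) (hα : α ≠ 0) :
    (Fin m → ℂ) ≃ₗ[ℂ] (Fin m → ℂ) where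
  toFun x := fun ν => if ν = i then α * x i else if ν = j then x j + β * x i else x ν
  invFun x := fun ν => if ν = i then α⁻¹ * x i else if ν = j then x j - β * α⁻¹ * x i else x ν
  map_add' x y := by funext ν; simp only [Pi.add_apply]; split_ifs <;> ring
  map_smul' c x := by
    funext ν; simp only [Pi.smul_apply, smul_eq_mul, RingHom.id_apply]; split_ifs <;> ring
  left_inv x := by
    funext ν
    by_cases h1 : ν = i
    · simp [h1, hij, Ne.symm hij]; try field_simp
    · by_cases h2 : ν = j
      · simp [h1, h2, hij, Ne.symm hij]; try field_simp; try ring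
      · simp [h1, h2]
  right_inv x := by
    funext ν
    by_cases h1 : ν = i
    · simp [h1, hij, Ne.symm hij]; try field_simp
    · by_cases h2 : ν = j
      · simp [h1, h2, hij, Ne.symm hij]; try field_simp; try ring
      · simp [h1, h2]

@[simp] lemma shearEquiv_apply (m : ℕ) (i j : Fin m) (hij : i ≠ j) (α β : ℂ) (hα : α ≠ 0)
    (x : Fin m → ℂ) (ν : Fin m) :
    shearEquiv m i j hij α β hα x ν
      = if ν = i then α * x i else if ν = j then x j + β * x i else x ν := rfl

/-- 2×2-block equiv on coordinates i, j. -/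
def blockEquiv (m : ℕ) (i j : Fin m) (hij : i ≠ j) (A B C D : ℂ) (h : A * D - B * C ≠ 0) :
    (Fin m → ℂ) ≃ₗ[ℂ] (Fin m → ℂ) where
  toFun x := fun ν => if ν = i then A * x i + B * x j else if ν = j then C * x i + D * x j else x ν
  invFun x := fun ν =>
    if ν = i then (A * D - B * C)⁻¹ * (D * x i - B * x j)
    else if ν = j then (A * D - B * C)⁻¹ * (A * x j - C * x i) else x ν
  map_add' x y := by funext ν; simp only [Pi.add_apply]; split_ifs <;> ring
  map_smul' c x := by
    funext ν; simp only [Pi.smul_apply, smul_eq_mul, RingHom.id_apply]; split_ifs <;> ring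
  left_inv x := by
    funext ν
    by_cases h1 : ν = i
    · simp only [h1, if_pos rfl, if_neg hij, if_neg (Ne.symm hij), if_true, if_false]
      field_simp; ring
    · by_cases h2 : ν = j
      · simp only [h1, h2, if_pos rfl, if_neg hij, if_neg (Ne.symm hij), if_true, if_false]
        field_simp; ring
      · simp [h1, h2]
  right_inv x := by
    funext ν
    by_cases h1 : ν = i
    · simp only [h1, if_pos rfl, if_neg hij, if_neg (Ne.symm hij), if_true, if_false]
      field_simp; ring
    · by_cases h2 : ν = j
      · simp only [h1, h2, if_pos rfl, if_neg hij, if_neg (Ne.symm hij), if_true, if_false]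
        field_simp
        have e : (-(C * B) + D * A) * (-(C * B) + D * A)⁻¹ = 1 :=
          mul_inv_cancel₀ (by rw [show -(C * B) + D * A = A * D - B * C by ring]; exact h)
        linear_combination x j * e
      · simp [h1, h2]

@[simp] lemma blockEquiv_apply (m : ℕ) (i j : Fin m) (hij : i ≠ j) (A B C D : ℂ)
    (h : A * D - B * C ≠ 0) (x : Fin m → ℂ) (ν : Fin m) :
    blockEquiv m i j hij A B C D h x ν
      = if ν = i then A * x i + B * x j else if ν = j then C * x i + D * x j else x ν := rfl

/-- double shear equiv: `x_p ↦ x_p + wp x_i`, `x_q ↦ x_q + wq x_i`, `x_i` fixed. -/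
def hshearEquiv (m : ℕ) (i p q : Fin m) (hip : i ≠ p) (hiq : i ≠ q) (hpq : p ≠ q)
    (wp wq : ℂ) : (Fin m → ℂ) ≃ₗ[ℂ] (Fin m → ℂ) where
  toFun x := fun ν => if ν = p then x p + wp * x i else if ν = q then x q + wq * x i else x ν
  invFun x := fun ν => if ν = p then x p - wp * x i else if ν = q then x q - wq * x i else x ν
  map_add' x y := by funext ν; simp only [Pi.add_apply]; split_ifs <;> ring
  map_smul' c x := by
    funext ν; simp only [Pi.smul_apply, smul_eq_mul, RingHom.id_apply]; split_ifs <;> ring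
  left_inv x := by
    funext ν
    by_cases h1 : ν = p
    · simp [h1, hip, hiq, hpq, Ne.symm hip, Ne.symm hiq, Ne.symm hpq]
    · by_cases h2 : ν = q
      · simp [h1, h2, hip, hiq, hpq, Ne.symm hip, Ne.symm hiq, Ne.symm hpq]
      · simp [h1, h2]
  right_inv x := by
    funext ν
    by_cases h1 : ν = p
    · simp [h1, hip, hiq, hpq, Ne.symm hip, Ne.symm hiq, Ne.symm hpq]
    · by_cases h2 : ν = q
      · simp [h1, h2, hip, hiq, hpq, Ne.symm hip, Ne.symm hiq, Ne.symm hpq]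
      · simp [h1, h2]

@[simp] lemma hshearEquiv_apply (m : ℕ) (i p q : Fin m) (hip : i ≠ p) (hiq : i ≠ q)
    (hpq : p ≠ q) (wp wq : ℂ) (x : Fin m → ℂ) (ν : Fin m) :
    hshearEquiv m i p q hip hiq hpq wp wq x ν
      = if ν = p then x p + wp * x i else if ν = q then x q + wq * x i else x ν := rfl

lemma wdiff (a₁ a₂ : ℂ) (ha₁ : a₁ ≠ 0) (ha₂ : a₂ ≠ 0) :
    ((1 - a₁) * (1 - a₂⁻¹)) * (1 - a₂) - ((1 - a₁) * (1 - a₂) * (a₁ * a₂)⁻¹) * (1 - a₁)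
      = (1 - a₁) * (1 - a₂) * (a₁ * a₂ - 1) * (a₁ * a₂)⁻¹ := by
  field_simp
  ring

section Eval
variable (n : ℕ) (hn : 4 ≤ n) (a₁ a₂ a₃ : ℂ) (lam : Fin n → ℂ)
  (hlam : lam = fun i => if i.val = n - 3 then a₁ else if i.val = n - 2 then a₂
      else if i.val = n - 1 then a₃ else 1)

include hn hlam

lemma extv_lam_one (k : ℕ) (hk : k < n - 3) : extv lam k = 1 := by
  have hkn : k < n := by omega
  have h1 : k ≠ n - 3 := by omega
  have h2 : k ≠ n - 2 := by omega
  have h3 : k ≠ n - 1 := by omega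
  simp [extv, hkn, hlam, h1, h2, h3]

lemma extv_lam_p : extv lam (n - 3) = a₁ := by
  have hkn : n - 3 < n := by omega
  simp [extv, hkn, hlam]

lemma extv_lam_q : extv lam (n - 2) = a₂ := by
  have hkn : n - 2 < n := by omega
  have h1 : n - 2 ≠ n - 3 := by omega
  simp [extv, hkn, hlam, h1]

lemma evalA (i j : ℕ) (hi : i < n - 3) (hj : j < n - 3) (T : ℕ → ℂ) (ν : ℕ) :
    braidL (extv lam) T i j ν = T ν := by
  unfold braidL
  split_ifs with h1 h2
  · rw [h1]
    rw [extv_lam_one n hn a₁ a₂ a₃ lam hlam i hi, extv_lam_one n hn a₁ a₂ a₃ lam hlam j hj]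
    ring
  · rw [h2]
    rw [extv_lam_one n hn a₁ a₂ a₃ lam hlam i hi, extv_lam_one n hn a₁ a₂ a₃ lam hlam j hj]
    ring
  · rfl

lemma evalB (i : ℕ) (hi : i < n - 3) (T : ℕ → ℂ) (ν : ℕ) :
    braidL (extv lam) T i (n - 3) ν
      = if ν = i then a₁ * T i
        else if ν = n - 3 then T (n - 3) + (1 - a₁) * T i else T ν := by
  unfold braidL
  have hΛi := extv_lam_one n hn a₁ a₂ a₃ lam hlam i hi
  have hΛp := extv_lam_p n hn a₁ a₂ a₃ lam hlam
  split_ifs with h1 h2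
  · rw [hΛi, hΛp]; ring
  · have hP : (∏ k ∈ Finset.Ico (i + 1) (n - 3), (extv lam k)⁻¹) = 1 := by
      apply Finset.prod_eq_one
      intro k hk
      rw [extv_lam_one n hn a₁ a₂ a₃ lam hlam k (Finset.mem_Ico.mp hk).2]
      simp
    rw [hΛi, hΛp, hP]; ring
  · rfl

lemma evalC (i : ℕ) (hi : i < n - 3) (T : ℕ → ℂ) (ν : ℕ) :
    braidL (extv lam) T i (n - 2) ν
      = if ν = i then a₂ * T i
        else if ν = n - 2 then T (n - 2) + (1 - a₂) * a₁⁻¹ * T i else T ν := by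
  unfold braidL
  have hΛi := extv_lam_one n hn a₁ a₂ a₃ lam hlam i hi
  have hΛq := extv_lam_q n hn a₁ a₂ a₃ lam hlam
  split_ifs with h1 h2
  · rw [hΛi, hΛq]; ring
  · have hP : (∏ k ∈ Finset.Ico (i + 1) (n - 2), (extv lam k)⁻¹) = a₁⁻¹ := by
      rw [Finset.prod_eq_single_of_mem (n - 3) (by simp [Finset.mem_Ico]; omega)]
      · rw [extv_lam_p n hn a₁ a₂ a₃ lam hlam]
      · intro b hb hbne
        have hb' := Finset.mem_Ico.mp hb
        rw [extv_lam_one n hn a₁ a₂ a₃ lam hlam b (by omega)]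
        simp
    rw [hΛi, hΛq, hP]; ring
  · rfl

lemma evalD (T : ℕ → ℂ) (ν : ℕ) :
    braidL (extv lam) T (n - 3) (n - 2) ν
      = if ν = n - 3 then (1 - a₁ + a₁ * a₂) * T (n - 3) + a₁ * (1 - a₁) * T (n - 2)
        else if ν = n - 2 then (1 - a₂) * T (n - 3) + a₁ * T (n - 2) else T ν := by
  unfold braidL
  have hΛp := extv_lam_p n hn a₁ a₂ a₃ lam hlam
  have hΛq := extv_lam_q n hn a₁ a₂ a₃ lam hlam
  have hq : n - 2 = (n - 3) + 1 := by omega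
  split_ifs with h1 h2
  · rw [hq]
    rw [Finset.prod_Icc_succ_top (by omega), Finset.sum_Icc_succ_top (by omega)]
    rw [Finset.Icc_self, Finset.prod_singleton, Finset.sum_singleton]
    rw [Finset.Ico_self, Finset.prod_empty]
    have : Finset.Ico (n - 3) (n - 3 + 1) = {n - 3} := by
      rw [Finset.Ico_add_one_right_eq_Icc, Finset.Icc_self]
    rw [this, Finset.prod_singleton, hΛp, ← hq, hΛq]
    ring
  · rw [show (n - 3) + 1 = n - 2 from hq.symm, Finset.Ico_self, Finset.prod_empty,
      Finset.sum_empty, hΛp, hΛq]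
    ring
  · rfl

lemma extv_delta (k : ℕ) :
    extv (deltaVec lam) k
      = if k = n - 3 then 1 - a₁ else if k = n - 2 then 1 - a₂ else 0 := by
  by_cases hk : k < n - 1
  · rw [show extv (deltaVec lam) k = deltaVec lam ⟨k, hk⟩ from dif_pos hk]
    show 1 - extv lam k = _
    by_cases h1 : k = n - 3
    · subst h1
      rw [extv_lam_p n hn a₁ a₂ a₃ lam hlam, if_pos rfl]
    · by_cases h2 : k = n - 2
      · subst h2
        rw [extv_lam_q n hn a₁ a₂ a₃ lam hlam, if_neg h1, if_pos rfl]
      · rw [extv_lam_one n hn a₁ a₂ a₃ lam hlam k (by omega), if_neg h1, if_neg h2]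
        ring
  · rw [show extv (deltaVec lam) k = 0 from dif_neg hk,
      if_neg (by omega), if_neg (by omega)]

omit hlam in
lemma extv_v0 (v₀ : Fin (n - 1) → ℂ)
    (hv₀ : v₀ = fun i => if i.val = n - 2 then -a₂ else 0) (k : ℕ) :
    extv v₀ k = if k = n - 2 then -a₂ else 0 := by
  by_cases hk : k < n - 1
  · rw [show extv v₀ k = v₀ ⟨k, hk⟩ from dif_pos hk, hv₀]
  · rw [show extv v₀ k = 0 from dif_neg hk, if_neg (by omega)]

lemma gen_fix (ha₁ : a₁ ≠ 0) (ha₂ : a₂ ≠ 0) (v₀ : Fin (n - 1) → ℂ)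
    (hv₀ : v₀ = fun i => if i.val = n - 2 then -a₂ else 0)
    (i j : Fin (n - 1)) (hij : i < j) :
    braidLV lam i j (deltaVec lam) = deltaVec lam ∧
    ∃ a b : ℂ, a ≠ 0 ∧ braidLV lam i j v₀ = a • v₀ + b • deltaVec lam := by
  have hjlt : j.val < n - 1 := j.isLt
  have hijv : i.val < j.val := Fin.lt_def.mp hij
  have hED := extv_delta n hn a₁ a₂ a₃ lam hlam
  have hEV := extv_v0 n hn a₂ v₀ hv₀
  rcases (show j.val < n - 3 ∨ j.val = n - 3 ∨ j.val = n - 2 by omega) with hj | hj | hj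
  · -- trivial generators
    have hid : ∀ τ : Fin (n - 1) → ℂ, braidLV lam i j τ = τ := by
      intro τ; funext ν
      show braidL (extv lam) (extv τ) i.val j.val ν.val = τ ν
      rw [evalA n hn a₁ a₂ a₃ lam hlam i.val j.val (by omega) hj, extv_val]
    exact ⟨hid _, 1, 0, one_ne_zero, by rw [hid]; module⟩
  · -- j = n-3
    have hi : i.val < n - 3 := by omega
    constructor
    · funext ν
      show braidL (extv lam) (extv (deltaVec lam)) i.val j.val ν.val = deltaVec lam ν
      rw [hj, evalB n hn a₁ a₂ a₃ lam hlam i.val hi, ← extv_val (deltaVec lam) ν]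
      simp only [hED]
      split_ifs <;> first | rfl | ring1 | (exfalso; omega)
    · refine ⟨1, 0, one_ne_zero, ?_⟩
      have hfix : braidLV lam i j v₀ = v₀ := by
        funext ν
        show braidL (extv lam) (extv v₀) i.val j.val ν.val = v₀ ν
        rw [hj, evalB n hn a₁ a₂ a₃ lam hlam i.val hi, ← extv_val v₀ ν]
        simp only [hEV]
        split_ifs <;> first | rfl | ring1 | (exfalso; omega)
      rw [hfix]; module
  · -- j = n-2
    by_cases hi : i.val < n - 3
    · constructor
      · funext ν
        show braidL (extv lam) (extv (deltaVec lam)) i.val j.val ν.val = deltaVec lam ν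
        rw [hj, evalC n hn a₁ a₂ a₃ lam hlam i.val hi, ← extv_val (deltaVec lam) ν]
        simp only [hED]
        split_ifs <;> first | rfl | ring1 | (exfalso; omega)
      · refine ⟨1, 0, one_ne_zero, ?_⟩
        have hfix : braidLV lam i j v₀ = v₀ := by
          funext ν
          show braidL (extv lam) (extv v₀) i.val j.val ν.val = v₀ ν
          rw [hj, evalC n hn a₁ a₂ a₃ lam hlam i.val hi, ← extv_val v₀ ν]
          simp only [hEV]
          split_ifs <;> first | rfl | ring1 | (exfalso; omega)
        rw [hfix]; module
    · -- i = n-3 : the D generator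
      have hi' : i.val = n - 3 := by omega
      constructor
      · funext ν
        show braidL (extv lam) (extv (deltaVec lam)) i.val j.val ν.val = deltaVec lam ν
        rw [hi', hj, evalD n hn a₁ a₂ a₃ lam hlam, ← extv_val (deltaVec lam) ν]
        simp only [hED]
        split_ifs <;> first | rfl | ring1 | (exfalso; omega)
      · refine ⟨a₁ * a₂, -(a₁ * a₂), mul_ne_zero ha₁ ha₂, ?_⟩
        funext ν
        show braidL (extv lam) (extv v₀) i.val j.val ν.val
          = ((a₁ * a₂) • v₀ + (-(a₁ * a₂)) • deltaVec lam) ν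
        rw [hi', hj, evalD n hn a₁ a₂ a₃ lam hlam]
        simp only [Pi.add_apply, Pi.smul_apply, smul_eq_mul]
        rw [← extv_val v₀ ν, ← extv_val (deltaVec lam) ν]
        simp only [hEV, hED]
        split_ifs <;> first | rfl | ring1 | (exfalso; omega)

end Eval
end BraidAff



namespace BraidAff

set_option maxHeartbeats 1000000 in
/-- Lemma 3.5 of the paper (nontriviality index 3): for
`λ = (1,…,1,a₁,a₂,a₃)` with `aᵢ ≠ 1` and `a₁a₂a₃ = 1`, the class of
`v⁰ = (0,…,0,−a₂)` is fixed by every element of `G_λ`, and every other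
non-abelian class has infinite `G_λ`-orbit. -/
theorem index_three_unique_fixed_point (n : ℕ) (hn : 4 ≤ n) (a₁ a₂ a₃ : ℂ)
    (ha₁ : a₁ ≠ 0) (ha₂ : a₂ ≠ 0) (ha₃ : a₃ ≠ 0)
    (ha₁' : a₁ ≠ 1) (ha₂' : a₂ ≠ 1) (ha₃' : a₃ ≠ 1) (hprod : a₁ * a₂ * a₃ = 1)
    (lam : Fin n → ℂ)
    (hlam : lam = fun i => if i.val = n - 3 then a₁ else if i.val = n - 2 then a₂
      else if i.val = n - 1 then a₃ else 1)
    (v₀ : Fin (n - 1) → ℂ)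
    (hv₀ : v₀ = fun i => if i.val = n - 2 then -a₂ else 0) :
    (∀ g ∈ Glam lam, affClass (deltaVec lam) (g v₀) = affClass (deltaVec lam) v₀) ∧
    (∀ v : Fin (n - 1) → ℂ, (¬ ∃ c : ℂ, v = c • deltaVec lam) →
      affClass (deltaVec lam) v ≠ affClass (deltaVec lam) v₀ →
      (classOrbit lam v).Infinite) := by
  have hone1 : (1 : ℂ) - a₁ ≠ 0 := sub_ne_zero.mpr (Ne.symm ha₁')
  have hone2 : (1 : ℂ) - a₂ ≠ 0 := sub_ne_zero.mpr (Ne.symm ha₂')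
  have h12 : a₁ * a₂ ≠ 1 := by
    intro h
    apply ha₃'
    calc a₃ = (a₁ * a₂) * a₃ := by rw [h, one_mul]
      _ = 1 := hprod
  have h12' : a₁ * a₂ - 1 ≠ 0 := sub_ne_zero.mpr h12
  have h12z : a₁ * a₂ ≠ 0 := mul_ne_zero ha₁ ha₂
  have hED := extv_delta n hn a₁ a₂ a₃ lam hlam
  have hδν : ∀ ν : Fin (n - 1), deltaVec lam ν
      = if ν.val = n - 3 then 1 - a₁ else if ν.val = n - 2 then 1 - a₂ else 0 := by
    intro ν; rw [← extv_val (deltaVec lam) ν, hED]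
  constructor
  · -- Part 1: the class of v₀ is fixed.
    intro g hg
    have hP : g (deltaVec lam) = deltaVec lam ∧
        ∃ a b : ℂ, a ≠ 0 ∧ g v₀ = a • v₀ + b • deltaVec lam := by
      refine Subgroup.closure_induction ?_ ?_ ?_ ?_ hg
      · rintro x ⟨i, j, hij, hx⟩
        obtain ⟨h1, a, b, ha, h2⟩ := gen_fix n hn a₁ a₂ a₃ lam hlam ha₁ ha₂ v₀ hv₀ i j hij
        exact ⟨(hx _).trans h1, a, b, ha, (hx _).trans h2⟩
      · exact ⟨rfl, 1, 0, one_ne_zero, by simp⟩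
      · rintro x y hxc hyc ⟨hxδ, ax, bx, hax, hxv⟩ ⟨hyδ, ay, byy, hay, hyv⟩
        refine ⟨?_, ay * ax, ay * bx + byy, mul_ne_zero hay hax, ?_⟩
        · rw [mul_apply', hyδ, hxδ]
        · rw [mul_apply', hyv, map_add, map_smul, map_smul, hxδ, hxv]
          module
      · rintro x hxc ⟨hxδ, a, b, ha, hxv⟩
        have h1 : x⁻¹ (deltaVec lam) = deltaVec lam := by
          calc x⁻¹ (deltaVec lam) = x⁻¹ (x (deltaVec lam)) := by rw [hxδ]
            _ = deltaVec lam := x.symm_apply_apply _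
        refine ⟨h1, a⁻¹, -(a⁻¹ * b), inv_ne_zero ha, ?_⟩
        have h2 : v₀ = a • (x⁻¹ v₀) + b • deltaVec lam := by
          calc v₀ = x⁻¹ (x v₀) := (x.symm_apply_apply v₀).symm
            _ = x⁻¹ (a • v₀ + b • deltaVec lam) := by rw [hxv]
            _ = a • (x⁻¹ v₀) + b • (x⁻¹ (deltaVec lam)) := by rw [map_add, map_smul, map_smul]
            _ = a • (x⁻¹ v₀) + b • deltaVec lam := by rw [h1]
        calc x⁻¹ v₀ = a⁻¹ • (a • (x⁻¹ v₀)) := by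
              rw [smul_smul, inv_mul_cancel₀ ha, one_smul]
          _ = a⁻¹ • (v₀ - b • deltaVec lam) := by rw [eq_sub_of_add_eq h2.symm]
          _ = a⁻¹ • v₀ + (-(a⁻¹ * b)) • deltaVec lam := by module
    obtain ⟨hgδ, a, b, ha, hgv⟩ := hP
    rw [hgv]
    exact affClass_smul_add _ _ a b ha
  · -- Part 2: any other nonabelian class has infinite orbit.
    intro v hv1 hv2
    have hplt : n - 3 < n - 1 := by omega
    have hqlt : n - 2 < n - 1 := by omega
    obtain ⟨fp, hfpv⟩ : ∃ fp : Fin (n - 1), fp.val = n - 3 := ⟨⟨n - 3, hplt⟩, rfl⟩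
    obtain ⟨fq, hfqv⟩ : ∃ fq : Fin (n - 1), fq.val = n - 2 := ⟨⟨n - 2, hqlt⟩, rfl⟩
    have hδfp : deltaVec lam fp = 1 - a₁ := by rw [hδν fp, hfpv, if_pos rfl]
    have hδfq : deltaVec lam fq = 1 - a₂ := by
      rw [hδν fq, hfqv, if_neg (by omega), if_pos rfl]
    have hv0fp : v₀ fp = 0 := by
      simp only [hv₀]; rw [if_neg (by rw [hfpv]; omega)]
    have hv0fq : v₀ fq = -a₂ := by
      simp only [hv₀]; rw [if_pos hfqv]
    have hex : ∃ i : Fin (n - 1), i.val < n - 3 ∧ v i ≠ 0 := by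
      by_contra hno
      push_neg at hno
      obtain ⟨bb, hbb⟩ : ∃ b : ℂ, b = v fp / (1 - a₁) := ⟨_, rfl⟩
      obtain ⟨aa, haa⟩ : ∃ a : ℂ, a = (bb * (1 - a₂) - v fq) / a₂ := ⟨_, rfl⟩
      have hveq : v = aa • v₀ + bb • deltaVec lam := by
        funext ν
        simp only [Pi.add_apply, Pi.smul_apply, smul_eq_mul]
        rcases (show ν.val < n - 3 ∨ ν.val = n - 3 ∨ ν.val = n - 2 by omega) with h | h | h
        · rw [hno ν h, hδν ν, if_neg (by omega), if_neg (by omega)]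
          simp only [hv₀]
          rw [if_neg (by omega)]
          ring
        · have hνp : ν = fp := Fin.ext (by rw [hfpv]; exact h)
          rw [hνp, hδfp, hv0fp, hbb]
          field_simp
          ring
        · have hνq : ν = fq := Fin.ext (by rw [hfqv]; exact h)
          rw [hνq, hδfq, hv0fq, haa, hbb]
          field_simp
          ring
      rcases eq_or_ne aa 0 with h0 | h0
      · exact hv1 ⟨bb, by rw [hveq, h0]; module⟩
      · exact hv2 (by rw [hveq]; exact affClass_smul_add _ _ aa bb h0)
    obtain ⟨i, hi, hvi⟩ := hex
    have hifp : i ≠ fp := Fin.ne_of_val_ne (by rw [hfpv]; omega)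
    have hifq : i ≠ fq := Fin.ne_of_val_ne (by rw [hfqv]; omega)
    have hpq : fp ≠ fq := Fin.ne_of_val_ne (by rw [hfpv, hfqv]; omega)
    have hdet : (1 - a₁ + a₁ * a₂) * a₁ - (a₁ * (1 - a₁)) * (1 - a₂) ≠ 0 := by
      intro h
      apply h12z
      calc a₁ * a₂ = (1 - a₁ + a₁ * a₂) * a₁ - (a₁ * (1 - a₁)) * (1 - a₂) := by ring
        _ = 0 := h
    obtain ⟨Bh, hBdef⟩ : ∃ B, B = shearEquiv (n - 1) i fp hifp a₁ (1 - a₁) ha₁ := ⟨_, rfl⟩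
    obtain ⟨Dh, hDdef⟩ : ∃ D, D = blockEquiv (n - 1) fp fq hpq (1 - a₁ + a₁ * a₂)
      (a₁ * (1 - a₁)) (1 - a₂) a₁ hdet := ⟨_, rfl⟩
    obtain ⟨wp, hwp⟩ : ∃ w : ℂ, w = (1 - a₁) * (1 - a₂⁻¹) := ⟨_, rfl⟩
    obtain ⟨wq, hwq⟩ : ∃ w : ℂ, w = (1 - a₁) * (1 - a₂) * (a₁ * a₂)⁻¹ := ⟨_, rfl⟩
    obtain ⟨Hh, hHdef⟩ : ∃ H, H = hshearEquiv (n - 1) i fp fq hifp hifq hpq wp wq := ⟨_, rfl⟩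
    have hBmem : Bh ∈ Glam lam := by
      apply Subgroup.subset_closure
      refine ⟨i, fp, by rw [Fin.lt_def, hfpv]; omega, ?_⟩
      intro τ; funext ν
      show Bh τ ν = braidL (extv lam) (extv τ) i.val fp.val ν.val
      rw [hfpv, evalB n hn a₁ a₂ a₃ lam hlam i.val hi]
      rw [show extv τ (n - 3) = τ fp from by rw [← hfpv]; exact extv_val τ fp]
      rw [hBdef, shearEquiv_apply]
      simp only [extv_val, Fin.ext_iff, hfpv]
    have hDmem : Dh ∈ Glam lam := by
      apply Subgroup.subset_closure
      refine ⟨fp, fq, by rw [Fin.lt_def, hfpv, hfqv]; omega, ?_⟩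
      intro τ; funext ν
      show Dh τ ν = braidL (extv lam) (extv τ) fp.val fq.val ν.val
      rw [hfpv, hfqv, evalD n hn a₁ a₂ a₃ lam hlam]
      rw [show extv τ (n - 3) = τ fp from by rw [← hfpv]; exact extv_val τ fp]
      rw [show extv τ (n - 2) = τ fq from by rw [← hfqv]; exact extv_val τ fq]
      rw [hDdef, blockEquiv_apply]
      simp only [extv_val, Fin.ext_iff, hfpv, hfqv]
    have hHmem : Hh ∈ Glam lam := by
      have key : Bh * (Dh * Hh) = Dh * Bh := by
        refine LinearEquiv.ext fun x => ?_
        funext ν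
        rw [mul_apply', mul_apply', mul_apply']
        simp only [hBdef, hDdef, hHdef, shearEquiv_apply, blockEquiv_apply, hshearEquiv_apply]
        by_cases h1 : ν = i
        · simp [h1, hifp, hifq, hpq, Ne.symm hifp, Ne.symm hifq, Ne.symm hpq]
        · by_cases h2 : ν = fp
          · simp only [h1, h2, if_pos rfl, if_neg hifp, if_neg hifq, if_neg hpq,
              if_neg (Ne.symm hifp), if_neg (Ne.symm hifq), if_neg (Ne.symm hpq), if_neg h1, if_true, if_false]
            rw [hwp, hwq]
            field_simp
            ring
          · by_cases h3 : ν = fq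
            · simp only [h1, h2, h3, if_pos rfl, if_neg hifp, if_neg hifq, if_neg hpq,
                if_neg (Ne.symm hifp), if_neg (Ne.symm hifq), if_neg (Ne.symm hpq),
                if_neg h1, if_neg h2, if_true, if_false]
              rw [hwp, hwq]
              field_simp
              ring
            · simp [h1, h2, h3]
      have key1 : Dh * Hh = Bh⁻¹ * (Dh * Bh) := by rw [← key, inv_mul_cancel_left]
      have key2 : Hh = Dh⁻¹ * (Bh⁻¹ * (Dh * Bh)) := by rw [← key1, inv_mul_cancel_left]
      rw [key2]
      exact Subgroup.mul_mem _ (Subgroup.inv_mem _ hDmem)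
        (Subgroup.mul_mem _ (Subgroup.inv_mem _ hBmem) (Subgroup.mul_mem _ hDmem hBmem))
    have hpow : ∀ m : ℕ, ((Hh ^ m) v)
        = fun ν => v ν + (m : ℂ) * v i * (if ν = fp then wp else if ν = fq then wq else 0) := by
      intro m
      induction m with
      | zero => funext ν; simp
      | succ m ih =>
        funext ν
        rw [pow_succ', mul_apply', ih, hHdef, hshearEquiv_apply]
        by_cases h2 : ν = fp
        · simp [h2, hifp, hifq, hpq, Ne.symm hifp, Ne.symm hifq, Ne.symm hpq]
          push_cast
          ring
        · by_cases h3 : ν = fq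
          · simp [h2, h3, hifp, hifq, hpq, Ne.symm hifp, Ne.symm hifq, Ne.symm hpq]
            push_cast
            ring
          · simp [h2, h3]
    have hδi : deltaVec lam i = 0 := by rw [hδν i, if_neg (by omega), if_neg (by omega)]
    have hwne : wp * (1 - a₂) - wq * (1 - a₁) ≠ 0 := by
      have hE : wp * (1 - a₂) - wq * (1 - a₁)
          = (1 - a₁) * (1 - a₂) * (a₁ * a₂ - 1) * (a₁ * a₂)⁻¹ := by
        rw [hwp, hwq]
        exact wdiff a₁ a₂ ha₁ ha₂
      rw [hE]
      exact mul_ne_zero (mul_ne_zero (mul_ne_zero hone1 hone2) h12') (inv_ne_zero h12z)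
    refine Set.infinite_of_injective_forall_mem
      (f := fun m : ℕ => affClass (deltaVec lam) ((Hh ^ m) v)) ?_ ?_
    · intro m₁ m₂ hf
      replace hf : affClass (deltaVec lam) ((Hh ^ m₁) v)
          = affClass (deltaVec lam) ((Hh ^ m₂) v) := hf
      have hmem : (Hh ^ m₁) v ∈ affClass (deltaVec lam) ((Hh ^ m₂) v) := by
        rw [← hf]; exact ⟨1, 0, one_ne_zero, by module⟩
      obtain ⟨a, b, ha, heq⟩ := hmem
      rw [hpow m₁, hpow m₂] at heq
      have Ei := congrFun heq i
      have Ep := congrFun heq fp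
      have Eq' := congrFun heq fq
      simp only [Pi.add_apply, Pi.smul_apply, smul_eq_mul, if_neg hifp, if_neg hifq,
        if_neg (Ne.symm hpq), hδi, hδfp, hδfq, mul_zero, add_zero, if_pos] at Ei Ep Eq'
      have ha1 : a = 1 := by
        have h5 : (a - 1) * v i = 0 := by linear_combination -Ei
        rcases mul_eq_zero.mp h5 with h | h
        · exact sub_eq_zero.mp h
        · exact absurd h hvi
      rw [ha1] at Ep Eq'
      have EP : ((m₁ : ℂ) - m₂) * (v i * wp) = b * (1 - a₁) := by linear_combination Ep
      have EQ : ((m₁ : ℂ) - m₂) * (v i * wq) = b * (1 - a₂) := by linear_combination Eq'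
      have hkey : ((m₁ : ℂ) - m₂) * (v i * (wp * (1 - a₂) - wq * (1 - a₁))) = 0 := by
        linear_combination (1 - a₂) * EP - (1 - a₁) * EQ
      have hm : ((m₁ : ℂ) - m₂) = 0 := by
        rcases mul_eq_zero.mp hkey with h | h
        · exact h
        · exact absurd h (mul_ne_zero hvi hwne)
      have hm2 : (m₁ : ℂ) = m₂ := by linear_combination hm
      exact_mod_cast hm2
    · intro m
      exact ⟨Hh ^ m, pow_mem hHmem m, rfl⟩

end BraidAff
end
end

section
/- Let n ≥ 4 and a ∈ ℂ* ∖ {1}. Set λ = (1,…,1,a,a⁻¹,a,a⁻¹) ∈ (ℂ*)ⁿ (so λ_{n−3} = a, λ_{n−2} = a⁻¹, λ_{n−1} = a, λₙ = a⁻¹ and all other entries equal 1). Then every v ∈ ℂ^{n−1} with v ∉ ℂ·δ_λ has infinite G_λ-orbit of the class [v]. -/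
noncomputable section

namespace BraidAff


/-! ### Auxiliary machinery -/

lemma extv_eq {m : ℕ} (f : Fin m → ℂ) (j : ℕ) (h : j < m) : extv f j = f ⟨j, h⟩ := dif_pos h

lemma extv_self {m : ℕ} (f : Fin m → ℂ) (ν : Fin m) : extv f (ν : ℕ) = f ν := by
  rw [extv_eq f _ ν.isLt]

def unipEquiv {m : ℕ} (e : Fin m → ℂ) (φ : (Fin m → ℂ) →ₗ[ℂ] ℂ) (hφe : φ e = 0) :
    (Fin m → ℂ) ≃ₗ[ℂ] (Fin m → ℂ) :=
  LinearEquiv.ofLinear (LinearMap.id + φ.smulRight e) (LinearMap.id - φ.smulRight e)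
    (by apply LinearMap.ext; intro w
        simp [map_sub, map_smul, hφe, smul_eq_mul])
    (by apply LinearMap.ext; intro w
        simp [map_add, map_smul, hφe, smul_eq_mul])

lemma unipEquiv_apply {m : ℕ} (e : Fin m → ℂ) (φ : (Fin m → ℂ) →ₗ[ℂ] ℂ) (hφe : φ e = 0)
    (w : Fin m → ℂ) : unipEquiv e φ hφe w = w + φ w • e := rfl

lemma unip_pow_apply {m : ℕ} (g : (Fin m → ℂ) ≃ₗ[ℂ] (Fin m → ℂ)) (e : Fin m → ℂ)
    (φ : (Fin m → ℂ) →ₗ[ℂ] ℂ) (hg : ∀ w, g w = w + φ w • e) (hφe : φ e = 0)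
    (w : Fin m → ℂ) : ∀ t : ℕ, (g ^ t) w = w + ((t : ℂ) * φ w) • e := by
  intro t
  induction t with
  | zero => simp
  | succ t ih =>
    rw [pow_succ']
    have h1 : (g * g ^ t) w = g ((g ^ t) w) := rfl
    rw [h1, ih, hg]
    have h2 : φ (w + ((t : ℂ) * φ w) • e) = φ w := by
      simp [map_add, map_smul, hφe, smul_eq_mul]
    rw [h2]
    push_cast
    module

lemma infinite_aux {m : ℕ} (δ v e : Fin m → ℂ) (φ : (Fin m → ℂ) →ₗ[ℂ] ℂ)
    (G : Subgroup ((Fin m → ℂ) ≃ₗ[ℂ] (Fin m → ℂ))) (g : (Fin m → ℂ) ≃ₗ[ℂ] (Fin m → ℂ))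
    (hgG : g ∈ G)
    (hpow : ∀ t : ℕ, (g ^ t) v = v + ((t : ℂ) * φ v) • e)
    (hφe : φ e = 0) (hφδ : φ δ = 0) (hφv : φ v ≠ 0)
    (ν1 ν2 : Fin m) (he1 : e ν1 = 0) (hδ1 : δ ν1 ≠ 0) (he2 : e ν2 ≠ 0) :
    {S | ∃ gg ∈ G, S = affClass δ (gg v)}.Infinite := by
  apply Set.infinite_of_injective_forall_mem
    (f := fun t : ℕ => affClass δ (v + ((t : ℂ) * φ v) • e))
  · intro t1 t2 h12
    have hmem : v + ((t2 : ℂ) * φ v) • e ∈ affClass δ (v + ((t1 : ℂ) * φ v) • e) := by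
      beta_reduce at h12
      rw [h12]; exact ⟨1, 0, one_ne_zero, by simp⟩
    obtain ⟨α, β, hα, heq⟩ := hmem
    have h1 : φ v = α * φ v := by
      have h0 := congrArg φ heq
      simpa [map_add, map_smul, hφe, hφδ, smul_eq_mul] using h0
    have hα1 : α = 1 := by
      have h2 : (α - 1) * φ v = 0 := by linear_combination -h1
      rcases mul_eq_zero.mp h2 with h3 | h3
      · exact sub_eq_zero.mp h3
      · exact absurd h3 hφv
    rw [hα1, one_smul] at heq
    have hβ : β = 0 := by
      have h4 := congrFun heq ν1
      simp only [Pi.add_apply, Pi.smul_apply, smul_eq_mul, he1, mul_zero, add_zero] at h4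
      have h5 : β * δ ν1 = 0 := by linear_combination -h4
      rcases mul_eq_zero.mp h5 with h6 | h6
      · exact h6
      · exact absurd h6 hδ1
    rw [hβ, zero_smul, add_zero] at heq
    have h7 := congrFun heq ν2
    simp only [Pi.add_apply, Pi.smul_apply, smul_eq_mul] at h7
    have h8 : (t2 : ℂ) * (φ v * e ν2) = (t1 : ℂ) * (φ v * e ν2) := by linear_combination h7
    have h9 : (t1 : ℂ) = (t2 : ℂ) := (mul_right_cancel₀ (mul_ne_zero hφv he2) h8).symm
    exact_mod_cast h9
  · intro t
    exact ⟨g ^ t, pow_mem hgG t, by rw [hpow t]⟩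

/-! ### The specific `λ = (1,…,1,a,a⁻¹,a,a⁻¹)` -/

def lamF (k : ℕ) (a : ℂ) : Fin (k + 4) → ℂ := fun i =>
  if i.val = k then a else if i.val = k + 1 then a⁻¹
    else if i.val = k + 2 then a else if i.val = k + 3 then a⁻¹ else 1

def pIdx (k : ℕ) : Fin (k + 4 - 1) := ⟨k, by omega⟩
def qIdx (k : ℕ) : Fin (k + 4 - 1) := ⟨k + 1, by omega⟩
def rIdx (k : ℕ) : Fin (k + 4 - 1) := ⟨k + 2, by omega⟩

def e1f (k : ℕ) (a : ℂ) : Fin (k + 4 - 1) → ℂ := fun ν =>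
  if ν.val = k then 1 - a else if ν.val = k + 1 then 1 - a⁻¹ else 0
def e2f (k : ℕ) (a : ℂ) : Fin (k + 4 - 1) → ℂ := fun ν =>
  if ν.val = k + 1 then 1 - a⁻¹ else if ν.val = k + 2 then 1 - a else 0

lemma extv_lamF_lt (k : ℕ) (a : ℂ) {j : ℕ} (h : j < k) : extv (lamF k a) j = 1 := by
  rw [extv_eq _ _ (show j < k + 4 by omega)]
  simp only [lamF]
  rw [if_neg (by omega), if_neg (by omega), if_neg (by omega), if_neg (by omega)]

lemma extv_lamF_k (k : ℕ) (a : ℂ) : extv (lamF k a) k = a := by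
  rw [extv_eq _ _ (show k < k + 4 by omega)]
  simp [lamF]

lemma extv_lamF_k1 (k : ℕ) (a : ℂ) : extv (lamF k a) (k + 1) = a⁻¹ := by
  rw [extv_eq _ _ (show k + 1 < k + 4 by omega)]
  simp only [lamF]
  rw [if_neg (by omega)]; simp

lemma extv_lamF_k2 (k : ℕ) (a : ℂ) : extv (lamF k a) (k + 2) = a := by
  rw [extv_eq _ _ (show k + 2 < k + 4 by omega)]
  simp only [lamF]
  rw [if_neg (by omega), if_neg (by omega)]; simp

lemma extv_p (k : ℕ) (τ : Fin (k + 4 - 1) → ℂ) : extv τ k = τ (pIdx k) :=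
  extv_eq τ k (by omega)
lemma extv_q (k : ℕ) (τ : Fin (k + 4 - 1) → ℂ) : extv τ (k + 1) = τ (qIdx k) :=
  extv_eq τ (k + 1) (by omega)
lemma extv_r (k : ℕ) (τ : Fin (k + 4 - 1) → ℂ) : extv τ (k + 2) = τ (rIdx k) :=
  extv_eq τ (k + 2) (by omega)

lemma delta_p (k : ℕ) (a : ℂ) : deltaVec (lamF k a) (pIdx k) = 1 - a := by
  show 1 - extv (lamF k a) k = 1 - a
  rw [extv_lamF_k]
lemma delta_q (k : ℕ) (a : ℂ) : deltaVec (lamF k a) (qIdx k) = 1 - a⁻¹ := by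
  show 1 - extv (lamF k a) (k + 1) = 1 - a⁻¹
  rw [extv_lamF_k1]
lemma delta_r (k : ℕ) (a : ℂ) : deltaVec (lamF k a) (rIdx k) = 1 - a := by
  show 1 - extv (lamF k a) (k + 2) = 1 - a
  rw [extv_lamF_k2]
lemma delta_lt (k : ℕ) (a : ℂ) {ν : Fin (k + 4 - 1)} (h : ν.val < k) :
    deltaVec (lamF k a) ν = 0 := by
  show 1 - extv (lamF k a) ν.val = 0
  rw [extv_lamF_lt k a h, sub_self]

lemma e1f_p (k : ℕ) (a : ℂ) : e1f k a (pIdx k) = 1 - a := by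
  simp [e1f, pIdx]
lemma e1f_q (k : ℕ) (a : ℂ) : e1f k a (qIdx k) = 1 - a⁻¹ := by
  simp only [e1f, qIdx]; rw [if_neg (by omega)]; simp
lemma e1f_zero (k : ℕ) (a : ℂ) {ν : Fin (k + 4 - 1)} (h1 : ν.val ≠ k) (h2 : ν.val ≠ k + 1) :
    e1f k a ν = 0 := by
  simp only [e1f]; rw [if_neg h1, if_neg h2]
lemma e2f_q (k : ℕ) (a : ℂ) : e2f k a (qIdx k) = 1 - a⁻¹ := by
  simp [e2f, qIdx]
lemma e2f_r (k : ℕ) (a : ℂ) : e2f k a (rIdx k) = 1 - a := by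
  simp only [e2f, rIdx]; rw [if_neg (by omega)]; simp
lemma e2f_zero (k : ℕ) (a : ℂ) {ν : Fin (k + 4 - 1)} (h1 : ν.val ≠ k + 1) (h2 : ν.val ≠ k + 2) :
    e2f k a ν = 0 := by
  simp only [e2f]; rw [if_neg h1, if_neg h2]

lemma braidLV_pq (k : ℕ) (a : ℂ) (ha : a ≠ 0) (τ : Fin (k + 4 - 1) → ℂ) :
    braidLV (lamF k a) (pIdx k) (qIdx k) τ
      = τ + (τ (pIdx k) + a * τ (qIdx k)) • e1f k a := by
  have hprod : (∏ l ∈ Finset.Icc k (k + 1), extv (lamF k a) l) = a * a⁻¹ := by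
    rw [Finset.prod_Icc_succ_top (Nat.le_succ k), Finset.Icc_self, Finset.prod_singleton,
        extv_lamF_k, extv_lamF_k1]
  have hsum : (∑ kk ∈ Finset.Icc k (k + 1),
      (∏ l ∈ Finset.Ico k kk, extv (lamF k a) l) * extv τ kk)
      = τ (pIdx k) + a * τ (qIdx k) := by
    rw [Finset.sum_Icc_succ_top (Nat.le_succ k), Finset.Icc_self, Finset.sum_singleton,
        Finset.Ico_self, Finset.prod_empty, Finset.Ico_add_one_right_eq_Icc, Finset.Icc_self,
        Finset.prod_singleton, extv_lamF_k, one_mul, extv_p, extv_q]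
  funext ν
  simp only [braidLV, braidL, pIdx, qIdx, Pi.add_apply, Pi.smul_apply, smul_eq_mul]
  by_cases h1 : (ν : ℕ) = k
  · rw [if_pos (c := (ν : ℕ) = k) (h := instDecidableEqNat (ν : ℕ) (pIdx k : ℕ)) h1]
    have hν : ν = pIdx k := Fin.ext h1
    simp only [pIdx] at hν hprod hsum
    rw [hprod, hsum, extv_lamF_k, extv_lamF_k1, extv_p, extv_q, hν]
    have he : e1f k a (pIdx k) = 1 - a := e1f_p k a
    simp only [pIdx] at he
    rw [he]
    simp only [qIdx, pIdx]
    field_simp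
    ring
  · by_cases h2 : (ν : ℕ) = k + 1
    · rw [if_neg (c := (ν : ℕ) = k) (h := instDecidableEqNat (ν : ℕ) (pIdx k : ℕ)) h1, if_pos (c := (ν : ℕ) = k + 1) (h := instDecidableEqNat (ν : ℕ) (qIdx k : ℕ)) h2]
      have hν : ν = qIdx k := Fin.ext h2
      simp only [qIdx] at hν
      simp only [Finset.Ico_self, Finset.prod_empty, Finset.sum_empty]
      rw [extv_lamF_k, extv_lamF_k1, extv_p, extv_q, hν]
      have he : e1f k a (qIdx k) = 1 - a⁻¹ := e1f_q k a
      simp only [qIdx] at he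
      rw [he]
      simp only [qIdx, pIdx]
      field_simp
      ring
    · simp only [if_neg h1, if_neg h2, extv_self]
      rw [e1f_zero k a h1 h2, mul_zero, add_zero]

lemma braidLV_qr (k : ℕ) (a : ℂ) (ha : a ≠ 0) (τ : Fin (k + 4 - 1) → ℂ) :
    braidLV (lamF k a) (qIdx k) (rIdx k) τ
      = τ + (τ (qIdx k) + a⁻¹ * τ (rIdx k)) • e2f k a := by
  have hprod : (∏ l ∈ Finset.Icc (k + 1) (k + 2), extv (lamF k a) l) = a⁻¹ * a := by
    rw [Finset.prod_Icc_succ_top (by omega), Finset.Icc_self, Finset.prod_singleton,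
        extv_lamF_k1, extv_lamF_k2]
  have hsum : (∑ kk ∈ Finset.Icc (k + 1) (k + 2),
      (∏ l ∈ Finset.Ico (k + 1) kk, extv (lamF k a) l) * extv τ kk)
      = τ (qIdx k) + a⁻¹ * τ (rIdx k) := by
    rw [Finset.sum_Icc_succ_top (by omega), Finset.Icc_self, Finset.sum_singleton,
        Finset.Ico_self, Finset.prod_empty, Finset.Ico_add_one_right_eq_Icc, Finset.Icc_self,
        Finset.prod_singleton, extv_lamF_k1, one_mul, extv_q, extv_r]
  funext ν
  simp only [braidLV, braidL, qIdx, rIdx, Pi.add_apply, Pi.smul_apply, smul_eq_mul]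
  by_cases h1 : (ν : ℕ) = k + 1
  · rw [if_pos (c := (ν : ℕ) = k + 1) (h := instDecidableEqNat (ν : ℕ) (qIdx k : ℕ)) h1]
    have hν : ν = qIdx k := Fin.ext h1
    simp only [qIdx] at hν hprod hsum
    rw [hprod, hsum, extv_lamF_k1, extv_lamF_k2, extv_q, extv_r, hν]
    have he : e2f k a (qIdx k) = 1 - a⁻¹ := e2f_q k a
    simp only [qIdx] at he
    rw [he]
    simp only [qIdx, rIdx]
    field_simp
    ring
  · by_cases h2 : (ν : ℕ) = k + 2
    · rw [if_neg (c := (ν : ℕ) = k + 1) (h := instDecidableEqNat (ν : ℕ) (qIdx k : ℕ)) h1, if_pos (c := (ν : ℕ) = k + 2) (h := instDecidableEqNat (ν : ℕ) (rIdx k : ℕ)) h2]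
      have hν : ν = rIdx k := Fin.ext h2
      simp only [rIdx] at hν
      have hIco : Finset.Ico (k + 1 + 1) (k + 2) = (∅ : Finset ℕ) := by
        rw [Finset.Ico_eq_empty_iff]; omega
      rw [hIco]
      simp only [Finset.prod_empty, Finset.sum_empty]
      rw [extv_lamF_k1, extv_lamF_k2, extv_q, extv_r, hν]
      have he : e2f k a (rIdx k) = 1 - a := e2f_r k a
      simp only [rIdx] at he
      rw [he]
      simp only [qIdx, rIdx]
      field_simp
      ring
    · simp only [if_neg h1, if_neg h2, extv_self]
      rw [e2f_zero k a h1 h2, mul_zero, add_zero]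

lemma braidLV_ip (k : ℕ) (a : ℂ) {i : ℕ} (hik : i < k) (τ : Fin (k + 4 - 1) → ℂ) :
    braidLV (lamF k a) ⟨i, by omega⟩ (pIdx k) τ
      = fun ν => if ν = (⟨i, by omega⟩ : Fin (k + 4 - 1)) then a * τ ⟨i, by omega⟩
          else if ν = pIdx k then τ (pIdx k) + (1 - a) * τ ⟨i, by omega⟩ else τ ν := by
  funext ν
  simp only [braidLV, braidL, pIdx, Fin.ext_iff]
  by_cases h1 : (ν : ℕ) = i
  · rw [if_pos h1, if_pos h1]
    rw [extv_lamF_lt k a hik, extv_lamF_k, extv_eq τ i (by omega)]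
    ring
  · by_cases h2 : (ν : ℕ) = k
    · rw [if_neg h1, if_neg h1, if_pos h2, if_pos (c := (ν : ℕ) = k) (h := instDecidableEqNat (ν : ℕ) (pIdx k : ℕ)) h2]
      have hprod : (∏ l ∈ Finset.Ico (i + 1) k, (extv (lamF k a) l)⁻¹) = 1 := by
        apply Finset.prod_eq_one
        intro l hl
        rw [extv_lamF_lt k a (Finset.mem_Ico.mp hl).2, inv_one]
      rw [hprod, extv_lamF_lt k a hik, extv_lamF_k, extv_eq τ k (by omega),
          extv_eq τ i (by omega)]
      ring
    · simp only [if_neg h1, if_neg h2, extv_self]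

def scaleEquiv {m : ℕ} (i p : Fin m) (hip : i ≠ p) (a : ℂ) (ha : a ≠ 0) :
    (Fin m → ℂ) ≃ₗ[ℂ] (Fin m → ℂ) where
  toFun w := fun ν => if ν = i then a * w i else if ν = p then w p + (1 - a) * w i else w ν
  map_add' x y := by
    funext ν
    by_cases h1 : ν = i <;> by_cases h2 : ν = p <;>
      simp [h1, h2, hip, hip.symm, Pi.add_apply] <;> ring
  map_smul' c x := by
    funext ν
    by_cases h1 : ν = i <;> by_cases h2 : ν = p <;>
      simp [h1, h2, hip, hip.symm, Pi.smul_apply, smul_eq_mul] <;> ring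
  invFun w := fun ν =>
    if ν = i then a⁻¹ * w i else if ν = p then w p - (1 - a) * (a⁻¹ * w i) else w ν
  left_inv w := by
    funext ν
    dsimp only
    by_cases h1 : ν = i
    · subst h1
      rw [if_pos rfl, if_pos rfl]
      field_simp
    · by_cases h2 : ν = p
      · subst h2
        rw [if_neg h1, if_pos rfl, if_neg h1, if_pos rfl, if_pos rfl]
        field_simp
        ring
      · rw [if_neg h1, if_neg h2, if_neg h1, if_neg h2]
  right_inv w := by
    funext ν
    dsimp only
    by_cases h1 : ν = i
    · subst h1
      rw [if_pos rfl, if_pos rfl]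
      field_simp
    · by_cases h2 : ν = p
      · subst h2
        rw [if_neg h1, if_pos rfl, if_neg h1, if_pos rfl, if_pos rfl]
        field_simp
        ring
      · rw [if_neg h1, if_neg h2, if_neg h1, if_neg h2]

lemma scaleEquiv_apply {m : ℕ} (i p : Fin m) (hip : i ≠ p) (a : ℂ) (ha : a ≠ 0)
    (w : Fin m → ℂ) :
    scaleEquiv i p hip a ha w
      = fun ν => if ν = i then a * w i else if ν = p then w p + (1 - a) * w i else w ν := rfl

lemma scaleEquiv_symm_apply {m : ℕ} (i p : Fin m) (hip : i ≠ p) (a : ℂ) (ha : a ≠ 0)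
    (w : Fin m → ℂ) :
    (scaleEquiv i p hip a ha).symm w
      = fun ν => if ν = i then a⁻¹ * w i
          else if ν = p then w p - (1 - a) * (a⁻¹ * w i) else w ν := rfl

/-! ### The three unipotent elements -/

def phi1 (k : ℕ) (a : ℂ) : (Fin (k + 4 - 1) → ℂ) →ₗ[ℂ] ℂ :=
  LinearMap.proj (pIdx k) + a • LinearMap.proj (qIdx k)

lemma phi1_apply (k : ℕ) (a : ℂ) (w : Fin (k + 4 - 1) → ℂ) :
    phi1 k a w = w (pIdx k) + a * w (qIdx k) := rfl

lemma phi1_e1 (k : ℕ) (a : ℂ) (ha : a ≠ 0) : phi1 k a (e1f k a) = 0 := by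
  rw [phi1_apply, e1f_p, e1f_q]
  field_simp
  ring

lemma phi1_delta (k : ℕ) (a : ℂ) (ha : a ≠ 0) : phi1 k a (deltaVec (lamF k a)) = 0 := by
  rw [phi1_apply, delta_p, delta_q]
  field_simp
  ring

def phi2 (k : ℕ) (a : ℂ) : (Fin (k + 4 - 1) → ℂ) →ₗ[ℂ] ℂ :=
  LinearMap.proj (qIdx k) + a⁻¹ • LinearMap.proj (rIdx k)

lemma phi2_apply (k : ℕ) (a : ℂ) (w : Fin (k + 4 - 1) → ℂ) :
    phi2 k a w = w (qIdx k) + a⁻¹ * w (rIdx k) := rfl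

lemma phi2_e2 (k : ℕ) (a : ℂ) (ha : a ≠ 0) : phi2 k a (e2f k a) = 0 := by
  rw [phi2_apply, e2f_q, e2f_r]
  field_simp
  ring

lemma phi2_delta (k : ℕ) (a : ℂ) (ha : a ≠ 0) : phi2 k a (deltaVec (lamF k a)) = 0 := by
  rw [phi2_apply, delta_q, delta_r]
  field_simp
  ring

def u1 (k : ℕ) (a : ℂ) (ha : a ≠ 0) : (Fin (k + 4 - 1) → ℂ) ≃ₗ[ℂ] (Fin (k + 4 - 1) → ℂ) :=
  unipEquiv (e1f k a) (phi1 k a) (phi1_e1 k a ha)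

def u2 (k : ℕ) (a : ℂ) (ha : a ≠ 0) : (Fin (k + 4 - 1) → ℂ) ≃ₗ[ℂ] (Fin (k + 4 - 1) → ℂ) :=
  unipEquiv (e2f k a) (phi2 k a) (phi2_e2 k a ha)

lemma u1_mem (k : ℕ) (a : ℂ) (ha : a ≠ 0) : u1 k a ha ∈ Glam (lamF k a) := by
  apply Subgroup.subset_closure
  refine ⟨pIdx k, qIdx k, ?_, fun τ => ?_⟩
  · rw [Fin.lt_def]; simp [pIdx, qIdx]
  · rw [braidLV_pq k a ha τ]; rfl

lemma u2_mem (k : ℕ) (a : ℂ) (ha : a ≠ 0) : u2 k a ha ∈ Glam (lamF k a) := by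
  apply Subgroup.subset_closure
  refine ⟨qIdx k, rIdx k, ?_, fun τ => ?_⟩
  · rw [Fin.lt_def]; simp [qIdx, rIdx]
  · rw [braidLV_qr k a ha τ]; rfl

/-- Lemma 3.6 of the paper: for `λ = (1,…,1,a,a⁻¹,a,a⁻¹)` with `a ≠ 1`, every
non-abelian class `[v]` has infinite `G_λ`-orbit. -/
theorem a_ainv_a_ainv_infinite (n : ℕ) (hn : 4 ≤ n) (a : ℂ)
    (ha : a ≠ 0) (ha1 : a ≠ 1)
    (lam : Fin n → ℂ)
    (hlam : lam = fun i => if i.val = n - 4 then a else if i.val = n - 3 then a⁻¹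
      else if i.val = n - 2 then a else if i.val = n - 1 then a⁻¹ else 1)
    (v : Fin (n - 1) → ℂ) (hv : ¬ ∃ c : ℂ, v = c • deltaVec lam) :
    (classOrbit lam v).Infinite := by
  obtain ⟨k, rfl⟩ : ∃ k, n = k + 4 := ⟨n - 4, by omega⟩
  have hlf : lam = lamF k a := by rw [hlam]; rfl
  subst hlf
  clear hlam hn
  have h1a : (1 : ℂ) - a ≠ 0 := sub_ne_zero_of_ne (Ne.symm ha1)
  have hainv : a⁻¹ ≠ 1 := fun hh => ha1 (by rw [← inv_inv a, hh, inv_one])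
  have h1ainv : (1 : ℂ) - a⁻¹ ≠ 0 := sub_ne_zero_of_ne (Ne.symm hainv)
  by_cases hc1 : v (pIdx k) + a * v (qIdx k) = 0
  · by_cases hc2 : v (qIdx k) + a⁻¹ * v (rIdx k) = 0
    · -- both functionals vanish: some coordinate below k is nonzero
      have hex : ∃ ν : Fin (k + 4 - 1), ν.val < k ∧ v ν ≠ 0 := by
        by_contra hno
        push_neg at hno
        apply hv
        have hvp : v (pIdx k) = -(a * v (qIdx k)) := by linear_combination hc1
        have hvr : v (rIdx k) = -(a * v (qIdx k)) := by
          have h : a * (v (qIdx k) + a⁻¹ * v (rIdx k)) = 0 := by rw [hc2, mul_zero]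
          have h2 : a * v (qIdx k) + v (rIdx k) = 0 := by
            rw [mul_add, ← mul_assoc, mul_inv_cancel₀ ha, one_mul] at h
            exact h
          linear_combination h2
        refine ⟨-(a * v (qIdx k)) / (1 - a), ?_⟩
        funext ν
        rw [Pi.smul_apply, smul_eq_mul]
        by_cases hk : ν.val = k
        · have : ν = pIdx k := Fin.ext hk
          subst this
          rw [delta_p, div_mul_cancel₀ _ h1a, hvp]
        · by_cases hk1 : ν.val = k + 1
          · have : ν = qIdx k := Fin.ext hk1
            subst this
            rw [delta_q]
            field_simp
            ring
          · by_cases hk2 : ν.val = k + 2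
            · have : ν = rIdx k := Fin.ext hk2
              subst this
              rw [delta_r, div_mul_cancel₀ _ h1a, hvr]
            · have hlt : ν.val < k := by
                have := ν.isLt
                omega
              rw [hno ν hlt, delta_lt k a hlt, mul_zero]
      obtain ⟨i0, hi0k, hvi⟩ := hex
      have hip : i0 ≠ pIdx k := Fin.ne_of_val_ne (by simp only [pIdx]; omega)
      have hiq : ¬ qIdx k = i0 := fun hh => by
        have := congrArg Fin.val hh
        simp only [qIdx] at this
        omega
      have hqp : ¬ qIdx k = pIdx k := fun hh => by
        have := congrArg Fin.val hh
        simp only [qIdx, pIdx] at this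
        omega
      set H := scaleEquiv i0 (pIdx k) hip a ha with hH
      have hHmem : H ∈ Glam (lamF k a) := by
        apply Subgroup.subset_closure
        refine ⟨⟨i0.val, by omega⟩, pIdx k, ?_, fun τ => ?_⟩
        · rw [Fin.lt_def]; simp [pIdx]; omega
        · rw [braidLV_ip k a hi0k τ]; rfl
      -- the conjugated unipotent
      have hsymm_fix : ∀ w : Fin (k + 4 - 1) → ℂ, w i0 = 0 → H.symm w = w := by
        intro w hw
        funext ν
        rw [hH, scaleEquiv_symm_apply]
        dsimp only
        by_cases hh1 : ν = i0
        · rw [if_pos hh1, hh1, hw, mul_zero]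
        · rw [if_neg hh1]
          by_cases hh2 : ν = pIdx k
          · rw [if_pos hh2, hw, mul_zero, mul_zero, sub_zero, hh2]
          · rw [if_neg hh2]
      have hfix : ∀ w : Fin (k + 4 - 1) → ℂ, w i0 = 0 → H w = w := by
        intro w hw
        funext ν
        rw [hH, scaleEquiv_apply]
        dsimp only
        by_cases hh1 : ν = i0
        · rw [if_pos hh1, hh1, hw, mul_zero]
        · rw [if_neg hh1]
          by_cases hh2 : ν = pIdx k
          · rw [if_pos hh2, hw, mul_zero, add_zero, hh2]
          · rw [if_neg hh2]
      have he1i0 : e1f k a i0 = 0 := e1f_zero k a (by omega) (by omega)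
      have hdi0 : deltaVec (lamF k a) i0 = 0 := delta_lt k a hi0k
      set φ3 : (Fin (k + 4 - 1) → ℂ) →ₗ[ℂ] ℂ := (phi1 k a).comp H.symm.toLinearMap with hφ3
      have hφ3apply : ∀ w, φ3 w = phi1 k a (H.symm w) := fun w => rfl
      have hφ3e1 : φ3 (e1f k a) = 0 := by
        rw [hφ3apply, hsymm_fix _ he1i0, phi1_e1 k a ha]
      have hφ3δ : φ3 (deltaVec (lamF k a)) = 0 := by
        rw [hφ3apply, hsymm_fix _ hdi0, phi1_delta k a ha]
      have hφ3v : φ3 v ≠ 0 := by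
        have hval : φ3 v = (v (pIdx k) + a * v (qIdx k)) - (1 - a) * (a⁻¹ * v i0) := by
          rw [hφ3apply, phi1_apply, hH, scaleEquiv_symm_apply]
          dsimp only
          rw [if_neg (Ne.symm hip), if_pos rfl, if_neg hiq, if_neg hqp]
          ring
        rw [hval, hc1, zero_sub]
        exact neg_ne_zero.mpr (mul_ne_zero h1a (mul_ne_zero (inv_ne_zero ha) hvi))
      set g3 := unipEquiv (e1f k a) φ3 hφ3e1 with hg3def
      have hg3 : g3 = H * u1 k a ha * H⁻¹ := by
        apply LinearEquiv.toLinearMap_injective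
        apply LinearMap.ext
        intro w
        show g3 w = H (u1 k a ha (H.symm w))
        have hu : u1 k a ha (H.symm w) = H.symm w + phi1 k a (H.symm w) • e1f k a := rfl
        rw [hu, map_add, map_smul, H.apply_symm_apply, hfix _ he1i0]
        rfl
      have hg3mem : g3 ∈ Glam (lamF k a) := by
        rw [hg3]
        exact mul_mem (mul_mem hHmem (u1_mem k a ha)) (inv_mem hHmem)
      refine infinite_aux (deltaVec (lamF k a)) v (e1f k a) φ3 (Glam (lamF k a)) g3 hg3mem
        (unip_pow_apply g3 (e1f k a) φ3 (fun w => rfl) hφ3e1 v)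
        hφ3e1 hφ3δ hφ3v (rIdx k) (pIdx k) ?_ ?_ ?_
      · exact e1f_zero k a (by show k + 2 ≠ k; omega) (by show k + 2 ≠ k + 1; omega)
      · rw [delta_r]; exact h1a
      · rw [e1f_p]; exact h1a
    · -- second functional nonzero: use u2
      refine infinite_aux (deltaVec (lamF k a)) v (e2f k a) (phi2 k a) (Glam (lamF k a))
        (u2 k a ha) (u2_mem k a ha)
        (unip_pow_apply (u2 k a ha) (e2f k a) (phi2 k a) (fun w => rfl) (phi2_e2 k a ha) v)
        (phi2_e2 k a ha) (phi2_delta k a ha) hc2 (pIdx k) (rIdx k) ?_ ?_ ?_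
      · exact e2f_zero k a (by show k ≠ k + 1; omega) (by show k ≠ k + 2; omega)
      · rw [delta_p]; exact h1a
      · rw [e2f_r]; exact h1a
  · -- first functional nonzero: use u1
    refine infinite_aux (deltaVec (lamF k a)) v (e1f k a) (phi1 k a) (Glam (lamF k a))
      (u1 k a ha) (u1_mem k a ha)
      (unip_pow_apply (u1 k a ha) (e1f k a) (phi1 k a) (fun w => rfl) (phi1_e1 k a ha) v)
      (phi1_e1 k a ha) (phi1_delta k a ha) hc1 (rIdx k) (pIdx k) ?_ ?_ ?_
    · exact e1f_zero k a (by show k + 2 ≠ k; omega) (by show k + 2 ≠ k + 1; omega)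
    · rw [delta_r]; exact h1a
    · rw [e1f_p]; exact h1a

end BraidAff
end
end
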